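/- Let d and n be positive integers and suppose that for each prime ℓ dividing n we are given A_ℓ ∈ M_{2d}(ℤ_ℓ) such that the characteristic polynomials of the A_ℓ have integer coefficients independent of ℓ, and (A_ℓ − 1)² ∈ n·M_{2d}(ℤ_ℓ). Then for every eigenvalue α of A_ℓ (in an algebraic closure of ℚ_ℓ), the algebraic number (α−1)/√n is integral over ℤ. -/

import Mathlib

open Polynomial

variable {R : Type*} [CommRing R]

lemma coeff_comp_C_mul_X (p : R[X]) (s : R) (i : ℕ) :
    (p.comp (C s * X)).coeff i = s ^ i * p.coeff i := by
  induction p using Polynomial.induction_on' with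
  | add p q hp hq => simp [add_comp, hp, hq, mul_add]
  | monomial k a =>
    simp only [monomial_comp, mul_pow, ← C_pow, coeff_monomial]
    rw [← mul_assoc, ← C_mul, coeff_C_mul, coeff_X_pow]
    by_cases h : i = k
    · simp [h, mul_comm]
    · rw [if_neg h, if_neg (fun hh : k = i => h hh.symm), mul_zero, mul_zero]

lemma coeff_comp_neg_X (p : R[X]) (i : ℕ) :
    (p.comp (-X)).coeff i = (-1) ^ i * p.coeff i := by
  have h := coeff_comp_C_mul_X p (-1) i
  rw [map_neg, map_one, neg_mul, one_mul] at h
  exact h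

lemma coeff_comp_X_sq (p : R[X]) (i : ℕ) :
    (p.comp (X ^ 2)).coeff (2 * i) = p.coeff i := by
  induction p using Polynomial.induction_on' with
  | add p q hp hq => simp [add_comp, hp, hq]
  | monomial k a =>
    simp only [monomial_comp, ← pow_mul, coeff_C_mul, coeff_X_pow, coeff_monomial]
    by_cases h : k = i
    · simp [h, mul_comm]
    · rw [if_neg (by omega), if_neg h, mul_zero]

lemma sum_range_two_mul {M : Type*} [AddCommMonoid M] (k : ℕ) (f : ℕ → M) :
    ∑ i ∈ Finset.range (2 * k), f i
      = ∑ i ∈ Finset.range k, f (2 * i) + ∑ i ∈ Finset.range k, f (2 * i + 1) := by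
  induction k with
  | zero => simp
  | succ k ih =>
    have h2 : 2 * (k + 1) = (2 * k + 1) + 1 := by ring
    rw [h2, Finset.sum_range_succ, Finset.sum_range_succ, ih,
      Finset.sum_range_succ, Finset.sum_range_succ]
    abel

open Polynomial Matrix

variable {R : Type*} [CommRing R] {m : ℕ}

-- applying an eval₂ hom to charpoly = det of mapped charmatrix
lemma comp_charpoly (M : Matrix (Fin m) (Fin m) R) (q : R[X]) :
    M.charpoly.comp q = ((charmatrix M).map (eval₂RingHom C q)).det := by
  rw [Matrix.charpoly]
  have : M.charmatrix.det.comp q = (eval₂RingHom C q) M.charmatrix.det := rfl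
  rw [this, RingHom.map_det, RingHom.mapMatrix_apply]

lemma charmatrix_map_X_add_one (A : Matrix (Fin m) (Fin m) R) :
    (charmatrix A).map (eval₂RingHom C (X + 1)) = charmatrix (A - 1) := by
  ext i j
  by_cases h : i = j
  · subst h
    simp [charmatrix_apply_eq, Matrix.sub_apply, Matrix.one_apply]
    ring
  · simp [charmatrix_apply_ne _ _ _ h, Matrix.sub_apply, Matrix.one_apply_ne h]

lemma charmatrix_map_one_sub (A : Matrix (Fin m) (Fin m) R) :
    (charmatrix A).map (eval₂RingHom C (1 - X))
      = -(Matrix.scalar (Fin m) (X : R[X]) + (A - 1).map (C : R →+* R[X])) := by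
  ext i j
  by_cases h : i = j
  · subst h
    simp [charmatrix_apply_eq, Matrix.scalar_apply, Matrix.sub_apply, Matrix.one_apply,
      Matrix.diagonal_apply_eq]
    ring
  · simp [charmatrix_apply_ne _ _ _ h, Matrix.scalar_apply, Matrix.sub_apply,
      Matrix.one_apply_ne h, Matrix.diagonal_apply_ne _ h]

lemma charmatrix_mul_key (N : Matrix (Fin m) (Fin m) R) :
    charmatrix N * (-(Matrix.scalar (Fin m) (X : R[X]) + N.map (C : R →+* R[X])))
      = -((charmatrix (N ^ 2)).map (eval₂RingHom C (X ^ 2))) := by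
  have h1 : charmatrix N = Matrix.scalar (Fin m) (X : R[X]) - N.map C := by
    ext i j
    by_cases h : i = j
    · subst h; simp [charmatrix_apply_eq, Matrix.scalar_apply]
    · simp [charmatrix_apply_ne _ _ _ h, Matrix.scalar_apply, Matrix.diagonal_apply_ne _ h]
  have h2 : (charmatrix (N ^ 2)).map (eval₂RingHom C (X ^ 2))
      = Matrix.scalar (Fin m) ((X : R[X]) ^ 2) - (N ^ 2).map C := by
    ext i j
    by_cases h : i = j
    · subst h; simp [charmatrix_apply_eq, Matrix.scalar_apply]
    · simp [charmatrix_apply_ne _ _ _ h, Matrix.scalar_apply, Matrix.diagonal_apply_ne _ h]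
  rw [h1, h2]
  have hc : (Matrix.scalar (Fin m) (X : R[X])) * N.map C = N.map C * Matrix.scalar (Fin m) X :=
    (Matrix.scalar_commute (X : R[X]) (fun r => Commute.all _ _) (N.map C)).eq
  have hmap : (N ^ 2).map (C : R →+* R[X]) = N.map C * N.map C := by
    rw [pow_two, Matrix.map_mul]
  have hp : (Matrix.scalar (Fin m) (X : R[X]) - N.map C)
      * (Matrix.scalar (Fin m) (X : R[X]) + N.map C)
      = Matrix.scalar (Fin m) ((X : R[X]) ^ 2) - (N ^ 2).map C := by
    rw [mul_add, sub_mul, sub_mul, ← map_mul (Matrix.scalar (Fin m)), ← pow_two, hmap, hc]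
    abel
  rw [mul_neg, hp]

open Polynomial Matrix


lemma smul_charpoly_comp (B : Matrix (Fin m) (Fin m) R) (c : R) :
    ((c • B).charpoly).comp (C c * X) = C (c ^ m) * B.charpoly := by
  have h : (charmatrix (c • B)).map (eval₂RingHom C (C c * X))
      = (C c : R[X]) • charmatrix B := by
    ext i j : 2
    by_cases h : i = j
    · subst h
      simp only [Matrix.map_apply, charmatrix_apply_eq, Matrix.smul_apply, smul_eq_mul,
        coe_eval₂RingHom, eval₂_sub, eval₂_X, eval₂_C]
      rw [mul_sub, C_mul]
    · simp only [Matrix.map_apply, charmatrix_apply_ne _ _ _ h, Matrix.smul_apply, smul_eq_mul,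
        coe_eval₂RingHom, eval₂_neg, eval₂_C]
      rw [mul_neg, C_mul]
  have hc : ((c • B).charpoly).comp (C c * X)
      = ((charmatrix (c • B)).map (eval₂RingHom C (C c * X))).det := by
    rw [Matrix.charpoly]
    have h2 : (charmatrix (c • B)).det.comp (C c * X)
        = (eval₂RingHom C (C c * X)) (charmatrix (c • B)).det := rfl
    rw [h2, RingHom.map_det, RingHom.mapMatrix_apply]
  rw [hc, h]
  rw [Matrix.det_smul, Fintype.card_fin, ← C_pow]
  rfl

lemma one_sub_X_natDegree : (1 - X : ℤ[X]).natDegree = 1 := by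
  have h : (1 - X : ℤ[X]) = -(X - C 1) := by rw [C_1]; ring
  rw [h, natDegree_neg, natDegree_X_sub_C]

lemma one_sub_X_leadingCoeff : (1 - X : ℤ[X]).leadingCoeff = -1 := by
  have h : (1 - X : ℤ[X]) = -(X - C 1) := by rw [C_1]; ring
  rw [h, leadingCoeff_neg, (monic_X_sub_C (1 : ℤ)).leadingCoeff]

lemma comp_one_sub_monic (d : ℕ) (P : ℤ[X]) (hP : P.Monic) (hdeg : P.natDegree = 2 * d) :
    (P.comp (1 - X)).Monic ∧ (P.comp (1 - X)).natDegree = 2 * d := by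
  have h1 := one_sub_X_natDegree
  have hd : (P.comp (1 - X)).natDegree = 2 * d := by
    rw [natDegree_comp, h1, hdeg, mul_one]
  have hlc := coeff_comp_degree_mul_degree (p := P) (q := (1 - X : ℤ[X]))
    (by rw [h1]; exact one_ne_zero)
  refine ⟨?_, hd⟩
  unfold Monic
  rw [leadingCoeff, hd]
  have h2 : P.natDegree * (1 - X : ℤ[X]).natDegree = 2 * d := by rw [h1, hdeg, mul_one]
  rw [← h2, hlc, hP.leadingCoeff, one_sub_X_leadingCoeff, one_mul, hdeg]
  simp [pow_mul]

lemma comp_X_add_one_monic (d : ℕ) (P : ℤ[X]) (hP : P.Monic) (hdeg : P.natDegree = 2 * d) :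
    (P.comp (X + 1)).Monic ∧ (P.comp (X + 1)).natDegree = 2 * d := by
  have h : (X + 1 : ℤ[X]) = X + C 1 := by rw [C_1]
  constructor
  · rw [h]; exact hP.comp_X_add_C 1
  · rw [natDegree_comp, hdeg, h, natDegree_X_add_C, mul_one]

lemma padic_pow_dvd_int {p : ℕ} [hp : Fact p.Prime] (e : ℕ) (c : ℤ)
    (h : ((p : ℤ_[p])) ^ e ∣ (c : ℤ_[p])) : (p : ℤ) ^ e ∣ c := by
  rw [← PadicInt.norm_int_le_pow_iff_dvd]
  obtain ⟨u, hu⟩ := h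
  rw [hu, norm_mul, norm_pow, PadicInt.norm_p]
  calc ((p : ℝ)⁻¹) ^ e * ‖u‖ ≤ ((p : ℝ)⁻¹) ^ e * 1 := by
        apply mul_le_mul_of_nonneg_left (PadicInt.norm_le_one u)
        positivity
    _ = (p : ℝ) ^ (-e : ℤ) := by
        rw [mul_one, inv_pow, ← zpow_natCast (p : ℝ), ← _root_.zpow_neg]

lemma int_dvd_of_padic (n : ℕ) (hn : 1 ≤ n) (k : ℕ) (c : ℤ)
    (H : ∀ (p : ℕ) [Fact p.Prime], p ∣ n → ((n : ℤ_[p])) ^ k ∣ (c : ℤ_[p])) :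
    (n : ℤ) ^ k ∣ c := by
  rcases eq_or_ne c 0 with rfl | hc
  · exact dvd_zero _
  have key : (n ^ k : ℕ) ∣ c.natAbs := by
    rw [← Nat.factorization_le_iff_dvd (pow_ne_zero _ (by omega)) (Int.natAbs_ne_zero.mpr hc)]
    intro p
    rw [Nat.factorization_pow]
    simp only [Finsupp.smul_apply, smul_eq_mul]
    set v := n.factorization p with hv
    rcases eq_or_ne v 0 with h0 | h0
    · simp [h0]
    have hp : p.Prime := by
      by_contra hnp
      exact h0 (Nat.factorization_eq_zero_of_not_prime n hnp)
    haveI : Fact p.Prime := ⟨hp⟩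
    have hpn : p ∣ n := Nat.dvd_of_factorization_pos h0
    have h1 : ((p : ℤ_[p])) ^ (k * v) ∣ (c : ℤ_[p]) := by
      have h2 : ((p : ℤ_[p])) ^ v ∣ (n : ℤ_[p]) := by
        have := Nat.ordProj_dvd n p
        have h3 : ((p ^ v : ℕ) : ℤ_[p]) ∣ ((n : ℕ) : ℤ_[p]) := Nat.cast_dvd_cast this
        rwa [Nat.cast_pow] at h3
      calc ((p : ℤ_[p])) ^ (k * v) = (((p : ℤ_[p])) ^ v) ^ k := by rw [← pow_mul, mul_comm]
        _ ∣ ((n : ℤ_[p])) ^ k := pow_dvd_pow_of_dvd h2 k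
        _ ∣ (c : ℤ_[p]) := H p hpn
    have h4 := padic_pow_dvd_int (k * v) c h1
    rw [← Nat.Prime.pow_dvd_iff_le_factorization hp (Int.natAbs_ne_zero.mpr hc)]
    have h5 : ((p ^ (k * v) : ℕ) : ℤ) ∣ c := by push_cast; exact h4
    exact Int.natCast_dvd.mp h5
  have h6 := Int.natCast_dvd.mpr key
  push_cast at h6
  exact h6



theorem stmt_13 (d n : ℕ) (hd : 1 ≤ d) (hn : 1 ≤ n)
    (P : Polynomial ℤ) (hP : P.Monic) (hdeg : P.natDegree = 2 * d)
    (A : ∀ (ℓ : ℕ) [Fact ℓ.Prime], ℓ ∣ n → Matrix (Fin (2 * d)) (Fin (2 * d)) ℤ_[ℓ])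
    (hchar : ∀ (ℓ : ℕ) [Fact ℓ.Prime] (h : ℓ ∣ n),
      (A ℓ h).charpoly = P.map (Int.castRingHom ℤ_[ℓ]))
    (hcong : ∀ (ℓ : ℕ) [Fact ℓ.Prime] (h : ℓ ∣ n),
      ∃ B : Matrix (Fin (2 * d)) (Fin (2 * d)) ℤ_[ℓ],
        (A ℓ h - 1) ^ 2 = (n : ℤ_[ℓ]) • B) :
    ∀ α : ℂ, (P.map (Int.castRingHom ℂ)).IsRoot α →
      IsIntegral ℤ ((α - 1) / (Real.sqrt n : ℂ)) := by
  intro α hroot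
  set z : ℂ := α - 1 with hz
  set G : ℤ[X] := P.comp (X + 1) * P.comp (1 - X) with hG
  obtain ⟨hm1, hd1⟩ := comp_X_add_one_monic d P hP hdeg
  obtain ⟨hm2, hd2⟩ := comp_one_sub_monic d P hP hdeg
  have hGmonic : G.Monic := hm1.mul hm2
  have hGdeg : G.natDegree = 4 * d := by
    rw [hG, natDegree_mul hm1.ne_zero hm2.ne_zero, hd1, hd2]; ring
  -- odd coefficients of G vanish
  have hodd : ∀ j, Odd j → G.coeff j = 0 := by
    intro j hj
    have hcomp : G.comp (-X) = G := by
      rw [hG, mul_comp, comp_assoc, comp_assoc]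
      have e1 : (X + 1 : ℤ[X]).comp (-X) = 1 - X := by
        rw [add_comp, X_comp, one_comp]; ring
      have e2 : (1 - X : ℤ[X]).comp (-X) = X + 1 := by
        rw [sub_comp, X_comp, one_comp]; ring
      rw [e1, e2, mul_comm]
    have hcoeff := coeff_comp_neg_X G j
    rw [hcomp] at hcoeff
    obtain ⟨t, rfl⟩ := hj
    have hpow : ((-1 : ℤ)) ^ (2 * t + 1) = -1 := by
      rw [pow_succ, pow_mul]; norm_num
    rw [hpow] at hcoeff
    omega
  -- divisibility of even coefficients
  have hdvd : ∀ i, i ≤ 2 * d → (n : ℤ) ^ (2 * d - i) ∣ G.coeff (2 * i) := by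
    intro i hi
    apply int_dvd_of_padic n hn
    intro p _ hpn
    set f := Int.castRingHom ℤ_[p] with hf
    set M := A p hpn - 1 with hM
    obtain ⟨B, hB⟩ := hcong p hpn
    have hmapG : G.map f = ((M ^ 2).charpoly).comp (X ^ 2) := by
      rw [hG, Polynomial.map_mul, Polynomial.map_comp, Polynomial.map_comp, ← hchar p hpn]
      have m1 : (X + 1 : ℤ[X]).map f = X + 1 := by
        rw [Polynomial.map_add, Polynomial.map_one, map_X]
      have m2 : (1 - X : ℤ[X]).map f = 1 - X := by
        rw [Polynomial.map_sub, Polynomial.map_one, map_X]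
      rw [m1, m2, comp_charpoly (A p hpn) (X + 1), comp_charpoly (A p hpn) (1 - X),
        charmatrix_map_X_add_one, charmatrix_map_one_sub, ← Matrix.det_mul, ← hM,
        charmatrix_mul_key, comp_charpoly (M ^ 2) (X ^ 2), Matrix.det_neg, Fintype.card_fin]
      have : ((-1 : (ℤ_[p])[X])) ^ (2 * d) = 1 := by rw [pow_mul]; norm_num
      rw [this, one_mul]
    have hcoeff : ((G.coeff (2 * i) : ℤ) : ℤ_[p]) = ((M ^ 2).charpoly).coeff i := by
      calc ((G.coeff (2 * i) : ℤ) : ℤ_[p]) = (G.map f).coeff (2 * i) :=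
            (Polynomial.coeff_map f _).symm
        _ = _ := by rw [hmapG, coeff_comp_X_sq]
    have hsc := smul_charpoly_comp B ((n : ℤ_[p]))
    rw [← hB] at hsc
    have hco := congrArg (fun q => q.coeff i) hsc
    simp only [coeff_comp_C_mul_X, coeff_C_mul] at hco
    have hn0 : ((n : ℤ_[p])) ≠ 0 := Nat.cast_ne_zero.mpr (by omega)
    have hsplit : ((n : ℤ_[p])) ^ (2 * d) = (n : ℤ_[p]) ^ i * (n : ℤ_[p]) ^ (2 * d - i) := by
      rw [← pow_add]; congr 1; omega
    rw [hsplit, mul_assoc] at hco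
    have hmc := mul_left_cancel₀ (pow_ne_zero i hn0) hco
    rw [hcoeff, hmc]
    exact Dvd.intro _ rfl
  -- complex evaluation of G at z is zero
  set fC := Int.castRingHom ℂ with hfC
  have hGC : (G.map fC).eval z = 0 := by
    rw [hG, Polynomial.map_mul, Polynomial.map_comp, Polynomial.map_comp, eval_mul, eval_comp]
    have m1 : (X + 1 : ℤ[X]).map fC = X + 1 := by
      rw [Polynomial.map_add, Polynomial.map_one, map_X]
    rw [m1, eval_add, eval_X, eval_one, hz, sub_add_cancel, hroot.eq_zero, zero_mul]
  -- sum over even coefficients is zero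
  have hsum : ∑ i ∈ Finset.range (2 * d + 1), ((G.coeff (2 * i) : ℂ)) * z ^ (2 * i) = 0 := by
    have hlt : (G.map fC).natDegree < 2 * (2 * d + 1) := by
      apply lt_of_le_of_lt Polynomial.natDegree_map_le
      rw [hGdeg]; omega
    have he := Polynomial.eval_eq_sum_range' hlt z
    rw [sum_range_two_mul] at he
    have hoddsum : ∑ i ∈ Finset.range (2 * d + 1), (G.map fC).coeff (2 * i + 1) * z ^ (2 * i + 1)
        = 0 := by
      apply Finset.sum_eq_zero
      intro i _
      rw [Polynomial.coeff_map, hodd (2 * i + 1) ⟨i, by ring⟩]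
      simp
    rw [hoddsum, add_zero, hGC] at he
    have he2 : ∑ i ∈ Finset.range (2 * d + 1), (G.map fC).coeff (2 * i) * z ^ (2 * i) = 0 :=
      he.symm
    rw [← he2]
    apply Finset.sum_congr rfl
    intro i _
    rw [Polynomial.coeff_map]
    rfl
  -- the monic witness polynomial
  set T : ℤ[X] := X ^ (2 * d)
      + ∑ i ∈ Finset.range (2 * d), C (G.coeff (2 * i) / (n : ℤ) ^ (2 * d - i)) * X ^ i with hT
  have hTmonic : T.Monic := by
    apply Polynomial.monic_X_pow_add
    apply lt_of_le_of_lt (Polynomial.degree_sum_le _ _)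
    rw [Finset.sup_lt_iff (by exact_mod_cast WithBot.bot_lt_coe (2 * d))]
    intro i hi
    apply lt_of_le_of_lt (Polynomial.degree_C_mul_X_pow_le _ _)
    exact_mod_cast WithBot.coe_lt_coe.mpr (Finset.mem_range.mp hi)
  -- the element and its square
  set w : ℂ := (α - 1) / (Real.sqrt n : ℂ) with hw
  have hnC : ((n : ℂ)) ≠ 0 := Nat.cast_ne_zero.mpr (by omega)
  have hw2 : w ^ 2 = z ^ 2 / (n : ℂ) := by
    rw [hw, div_pow, ← hz]
    congr 1
    rw [← Complex.ofReal_pow, Real.sq_sqrt (by positivity : (0:ℝ) ≤ (n:ℕ))]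
    norm_num
  have hTeval : (T.map fC).eval (w ^ 2) = 0 := by
    have hmul : (n : ℂ) ^ (2 * d) * (T.map fC).eval (w ^ 2) = 0 := by
      rw [hT, Polynomial.map_add, Polynomial.map_pow, map_X, eval_add, eval_pow, eval_X]
      rw [Polynomial.map_sum, eval_finset_sum]
      rw [mul_add, Finset.mul_sum]
      have htop : (n : ℂ) ^ (2 * d) * (w ^ 2) ^ (2 * d)
          = ((G.coeff (2 * (2 * d)) : ℂ)) * z ^ (2 * (2 * d)) := by
        have hc4 : G.coeff (2 * (2 * d)) = 1 := by
          have := hGmonic.coeff_natDegree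
          rwa [hGdeg, show 4 * d = 2 * (2 * d) by ring] at this
        rw [hc4, hw2, Int.cast_one, one_mul, div_pow, ← pow_mul, mul_comm,
          div_mul_cancel₀ _ (pow_ne_zero _ hnC)]
      have hterm : ∀ i ∈ Finset.range (2 * d),
          (n : ℂ) ^ (2 * d) * ((C (G.coeff (2 * i) / (n : ℤ) ^ (2 * d - i)) * X ^ i).map fC).eval
            (w ^ 2)
          = ((G.coeff (2 * i) : ℂ)) * z ^ (2 * i) := by
        intro i hi
        have hi' : i ≤ 2 * d := le_of_lt (Finset.mem_range.mp hi)
        have hcast : ((G.coeff (2 * i) / (n : ℤ) ^ (2 * d - i) : ℤ) : ℂ) * (n : ℂ) ^ (2 * d - i)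
            = ((G.coeff (2 * i) : ℂ)) := by
          rw [← Int.cast_natCast (R := ℂ) n, ← Int.cast_pow, ← Int.cast_mul,
            Int.ediv_mul_cancel (hdvd i hi')]
        rw [Polynomial.map_mul, Polynomial.map_pow, map_X, Polynomial.map_C, eval_mul, eval_pow,
          eval_X, eval_C, hw2, div_pow, ← pow_mul, hfC, Int.coe_castRingHom]
        rw [← hcast]
        have hnpow : (n : ℂ) ^ (2 * d) = (n : ℂ) ^ (2 * d - i) * (n : ℂ) ^ i := by
          rw [← pow_add]; congr 1; omega
        rw [hnpow]
        have hni : ((n : ℂ)) ^ i ≠ 0 := pow_ne_zero _ hnC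
        field_simp
      rw [htop, Finset.sum_congr rfl hterm]
      rw [Finset.sum_range_succ] at hsum
      rw [add_comm]
      exact hsum
    exact (mul_eq_zero.mp hmul).resolve_left (pow_ne_zero _ hnC)
  have hint2 : IsIntegral ℤ (w ^ 2) := by
    refine ⟨T, hTmonic, ?_⟩
    rw [← Polynomial.eval_map]
    rw [algebraMap_int_eq]
    exact hTeval
  exact hint2.of_pow (by norm_num)
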